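/- Let f, h be complex numbers with |f| ≤ 1, |h| ≤ 1, let g = (f+h)/2, let 0 < k < 1/8, and set j = g + k(f-h)². If g ≠ j (i.e. f ≠ h), then |(g - j)/(1 - conj(g)·j)| ≤ k/(1/4 - k) < 1. -/
import Mathlib


theorem stmt_9 (f h : ℂ) (hf : ‖f‖ ≤ 1) (hh : ‖h‖ ≤ 1) (k : ℝ) (hk : 0 < k) (hk' : k < 1/8)
    (g j : ℂ) (hg : g = (f + h) / 2) (hj : j = g + (k : ℂ) * (f - h) ^ 2) (hne : f ≠ h) :
    ‖(g - j) / (1 - (starRingEnd ℂ) g * j)‖ ≤ k / (1/4 - k) ∧ k / (1/4 - k) < 1 := by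
  have hd : (0:ℝ) < ‖f - h‖ := norm_pos_iff.mpr (sub_ne_zero.mpr hne)
  set d := ‖f - h‖ with hdd
  have hk4 : (0:ℝ) < 1/4 - k := by linarith
  have hgle : ‖g‖ ≤ 1 := by
    rw [hg]
    calc ‖(f+h)/2‖ = ‖f+h‖/2 := by simp
    _ ≤ (‖f‖+‖h‖)/2 := by gcongr; exact norm_add_le _ _
    _ ≤ 1 := by linarith
  have hpar : d^2 ≤ 4 * (1 - ‖g‖^2) := by
    have hp := parallelogram_law_with_norm ℝ f h
    have hgn : ‖f + h‖ = 2 * ‖g‖ := by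
      rw [hg, norm_div]; simp; ring
    nlinarith [norm_nonneg f, norm_nonneg h, norm_nonneg g]
  have hnum : ‖g - j‖ = k * d^2 := by
    have e : g - j = -((k:ℂ) * (f-h)^2) := by rw [hj]; ring
    rw [e, norm_neg, norm_mul, norm_pow, Complex.norm_real]
    rw [Real.norm_of_nonneg hk.le]
  have hden : (1/4 - k) * d^2 ≤ ‖(1:ℂ) - (starRingEnd ℂ) g * j‖ := by
    have h1 : (1:ℂ) - (starRingEnd ℂ) g * j
        = (1 - (starRingEnd ℂ) g * g) - (starRingEnd ℂ) g * ((k:ℂ) * (f-h)^2) := by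
      rw [hj]; ring
    have h2 : ‖(1:ℂ) - (starRingEnd ℂ) g * g‖ = 1 - ‖g‖^2 := by
      have e2 : (1:ℂ) - (starRingEnd ℂ) g * g = (((1 - ‖g‖^2 : ℝ)):ℂ) := by
        rw [Complex.conj_mul']; push_cast; ring
      rw [e2, Complex.norm_real]
      exact Real.norm_of_nonneg (by nlinarith)
    have h3 : ‖(starRingEnd ℂ) g * ((k:ℂ) * (f-h)^2)‖ ≤ k * d^2 := by
      rw [norm_mul, norm_mul, norm_pow, Complex.norm_real, Real.norm_of_nonneg hk.le,
        RCLike.norm_conj]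
      exact mul_le_of_le_one_left (by positivity) hgle
    calc (1/4 - k) * d^2 ≤ (1 - ‖g‖^2) - k * d^2 := by nlinarith
    _ ≤ ‖(1:ℂ) - (starRingEnd ℂ) g * g‖ - ‖(starRingEnd ℂ) g * ((k:ℂ) * (f-h)^2)‖ := by
        rw [h2]; linarith
    _ ≤ ‖(1:ℂ) - (starRingEnd ℂ) g * j‖ := by rw [h1]; exact norm_sub_norm_le _ _
  constructor
  · rw [norm_div, hnum]
    have hdpos : (0:ℝ) < (1/4 - k) * d^2 := by positivity
    calc k * d^2 / ‖(1:ℂ) - (starRingEnd ℂ) g * j‖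
        ≤ k * d^2 / ((1/4 - k) * d^2) := by
          apply div_le_div_of_nonneg_left (by positivity) hdpos hden
    _ = k / (1/4 - k) := by
          rw [mul_comm (1/4 - k) (d^2), mul_comm k (d^2),
            mul_div_mul_left _ _ (by positivity : d^2 ≠ 0)]
  · rw [div_lt_one hk4]; linarith
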